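/- (Proposition 4.1) The unique minimizer û of the CoCo objective, viewed as a map (x, γ, w) ↦ û(x, γ, w) from ℝ^n × [0,∞) × [0,∞)^{Σ_d C(n_d,2)} to ℝ^n, is jointly continuous in the data x, the tuning parameter γ, and the collection of nonnegative weights {w_{d,ij}}. -/

import Mathlib

open scoped BigOperators
open Finset MeasureTheory

noncomputable section

/-- The full (vectorized) index set of a `D`-way tensor with mode sizes `n d`. -/
abbrev TIdx {D : ℕ} (n : Fin D → ℕ) : Type := ∀ d, Fin (n d)

/-- The index set of a mode-`d` subarray: all modes except `d`. -/
abbrev RIdx {D : ℕ} (n : Fin D → ℕ) (d : Fin D) : Type :=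
  ∀ d' : {x : Fin D // x ≠ d}, Fin (n d'.1)

/-- Insert the mode-`d` index `i` into the partial index `g`. -/
def insIdx {D : ℕ} (n : Fin D → ℕ) (d : Fin D) (g : RIdx n d) (i : Fin (n d)) : TIdx n :=
  fun d' => if h : d' = d then h.symm ▸ i else g ⟨d', h⟩

/-- The matrix `A_{d,ij} = I ⊗ ⋯ ⊗ (e_i - e_j)ᵀ ⊗ ⋯ ⊗ I`, realized on the canonical
multi-index sets: applied to `u`, the `g`-th entry is `u(.., i, ..) - u(.., j, ..)`. -/
def Amat {D : ℕ} (n : Fin D → ℕ) (d : Fin D) (i j : Fin (n d)) :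
    Matrix (RIdx n d) (TIdx n) ℝ :=
  Matrix.of fun g f =>
    (if f = insIdx n d g i then (1 : ℝ) else 0) - (if f = insIdx n d g j then (1 : ℝ) else 0)

/-- Euclidean (ℓ₂) norm of a finitely-indexed real vector. -/
def l2 {κ : Type*} [Fintype κ] (v : κ → ℝ) : ℝ := Real.sqrt (∑ a, v a ^ 2)

/-- The mode-`d` fusion penalty `R_d(u) = Σ_{i<j} w_{d,ij} ‖A_{d,ij} u‖₂`. -/
def Rmode {D : ℕ} (n : Fin D → ℕ) (d : Fin D) (w : Fin (n d) → Fin (n d) → ℝ)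
    (u : TIdx n → ℝ) : ℝ :=
  ∑ i, ∑ j, if i < j then w i j * l2 ((Amat n d i j).mulVec u) else 0

/-- The CoCo objective `F_γ(u) = (1/2)‖x - u‖₂² + γ Σ_d Σ_{i<j} w_{d,ij} ‖A_{d,ij} u‖₂`. -/
def coco {D : ℕ} (n : Fin D → ℕ) (x : TIdx n → ℝ) (γ : ℝ)
    (w : ∀ d, Fin (n d) → Fin (n d) → ℝ) (u : TIdx n → ℝ) : ℝ :=
  (1 / 2) * ∑ f, (x f - u f) ^ 2 + γ * ∑ d, Rmode n d (w d) u

/-! ### Auxiliary lemmas -/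

lemma l2_eq_norm {κ : Type*} [Fintype κ] (v : κ → ℝ) :
    l2 v = ‖(WithLp.equiv 2 (κ → ℝ)).symm v‖ := by
  rw [EuclideanSpace.norm_eq]
  simp [l2, sq_abs]

lemma l2_nonneg {κ : Type*} [Fintype κ] (v : κ → ℝ) : 0 ≤ l2 v := Real.sqrt_nonneg _

lemma l2_zero {κ : Type*} [Fintype κ] : l2 (0 : κ → ℝ) = 0 := by simp [l2]

lemma l2_add_le {κ : Type*} [Fintype κ] (f g : κ → ℝ) : l2 (f + g) ≤ l2 f + l2 g := by
  rw [l2_eq_norm, l2_eq_norm, l2_eq_norm]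
  exact norm_add_le ((WithLp.equiv 2 (κ → ℝ)).symm f) ((WithLp.equiv 2 (κ → ℝ)).symm g)

lemma l2_smul {κ : Type*} [Fintype κ] (c : ℝ) (f : κ → ℝ) : l2 (c • f) = |c| * l2 f := by
  rw [l2_eq_norm, l2_eq_norm]
  simpa using norm_smul c ((WithLp.equiv 2 (κ → ℝ)).symm f)

lemma l2_mulVec_mid {ρ κ : Type*} [Fintype ρ] [Fintype κ] (A : Matrix ρ κ ℝ) (u v : κ → ℝ) :
    l2 (A.mulVec (fun f => (u f + v f) / 2)) ≤ (l2 (A.mulVec u) + l2 (A.mulVec v)) / 2 := by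
  have hm : (fun f => (u f + v f) / 2) = ((1 / 2 : ℝ)) • (u + v) := by
    funext a; simp [Pi.smul_apply, smul_eq_mul]; ring
  rw [hm, Matrix.mulVec_smul, Matrix.mulVec_add, l2_smul]
  have := l2_add_le (A.mulVec u) (A.mulVec v)
  rw [abs_of_nonneg (by norm_num : (0:ℝ) ≤ 1/2)]
  linarith

lemma norm_sq_eq {κ : Type*} [Fintype κ] (v : EuclideanSpace ℝ κ) :
    ‖v‖ ^ 2 = ∑ a, v a ^ 2 := by
  rw [EuclideanSpace.norm_eq, Real.sq_sqrt (by positivity)]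
  simp [sq_abs]

lemma Rmode_nonneg {D : ℕ} (n : Fin D → ℕ) (d : Fin D) (w : Fin (n d) → Fin (n d) → ℝ)
    (hw : ∀ i j, i < j → 0 ≤ w i j) (u : TIdx n → ℝ) : 0 ≤ Rmode n d w u := by
  apply Finset.sum_nonneg; intro i _
  apply Finset.sum_nonneg; intro j _
  split_ifs with h
  · exact mul_nonneg (hw i j h) (l2_nonneg _)
  · exact le_refl 0

lemma half_le_coco {D : ℕ} (n : Fin D → ℕ) (x : TIdx n → ℝ) (γ : ℝ)
    (w : ∀ d, Fin (n d) → Fin (n d) → ℝ) (hγ : 0 ≤ γ)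
    (hw : ∀ d i j, i < j → 0 ≤ w d i j) (u : TIdx n → ℝ) :
    (1 / 2) * ∑ f, (x f - u f) ^ 2 ≤ coco n x γ w u := by
  have : 0 ≤ γ * ∑ d, Rmode n d (w d) u :=
    mul_nonneg hγ (Finset.sum_nonneg fun d _ => Rmode_nonneg n d (w d) (hw d) u)
  unfold coco; linarith

lemma coco_zero {D : ℕ} (n : Fin D → ℕ) (x : TIdx n → ℝ) (γ : ℝ)
    (w : ∀ d, Fin (n d) → Fin (n d) → ℝ) :
    coco n x γ w (0 : TIdx n → ℝ) = (1 / 2) * ∑ f, x f ^ 2 := by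
  unfold coco Rmode
  simp [Matrix.mulVec_zero, l2_zero]

/-- Strong convexity: if `v` beats the midpoint of `u` and `v`, then the squared distance
between `u` and `v` is controlled by the gap in objective values. -/
lemma coco_strong {D : ℕ} (n : Fin D → ℕ) (x : TIdx n → ℝ) (γ : ℝ)
    (w : ∀ d, Fin (n d) → Fin (n d) → ℝ) (hγ : 0 ≤ γ)
    (hw : ∀ d i j, i < j → 0 ≤ w d i j) (u v : TIdx n → ℝ)
    (hmin : coco n x γ w v ≤ coco n x γ w (fun f => (u f + v f) / 2)) :
    ∑ f, (u f - v f) ^ 2 ≤ 4 * (coco n x γ w u - coco n x γ w v) := by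
  set m : TIdx n → ℝ := fun f => (u f + v f) / 2 with hm
  have hquad : ∑ f, (x f - m f) ^ 2
      = (∑ f, (x f - u f) ^ 2) / 2 + (∑ f, (x f - v f) ^ 2) / 2
        - (∑ f, (u f - v f) ^ 2) / 4 := by
    rw [Finset.sum_div, Finset.sum_div, Finset.sum_div, ← Finset.sum_add_distrib,
      ← Finset.sum_sub_distrib]
    refine Finset.sum_congr rfl fun f _ => ?_
    simp only [hm]; ring
  have hpen : ∀ d, Rmode n d (w d) m ≤ (Rmode n d (w d) u + Rmode n d (w d) v) / 2 := by
    intro d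
    unfold Rmode
    rw [div_eq_mul_inv, ← Finset.sum_add_distrib, Finset.sum_mul]
    refine Finset.sum_le_sum fun i _ => ?_
    rw [← Finset.sum_add_distrib, Finset.sum_mul]
    refine Finset.sum_le_sum fun j _ => ?_
    split_ifs with h
    · have h1 := l2_mulVec_mid (Amat n d i j) u v
      have h2 := hw d i j h
      calc w d i j * l2 ((Amat n d i j).mulVec m)
          ≤ w d i j * ((l2 ((Amat n d i j).mulVec u) + l2 ((Amat n d i j).mulVec v)) / 2) :=
            mul_le_mul_of_nonneg_left h1 h2
        _ = (w d i j * l2 ((Amat n d i j).mulVec u)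
              + w d i j * l2 ((Amat n d i j).mulVec v)) * 2⁻¹ := by ring
    · simp
  have hpen' : γ * ∑ d, Rmode n d (w d) m
      ≤ γ * ((∑ d, Rmode n d (w d) u) / 2 + (∑ d, Rmode n d (w d) v) / 2) := by
    apply mul_le_mul_of_nonneg_left _ hγ
    rw [Finset.sum_div, Finset.sum_div, ← Finset.sum_add_distrib]
    exact Finset.sum_le_sum fun d _ => le_of_le_of_eq (hpen d) (by ring)
  have hcm : coco n x γ w m ≤ (coco n x γ w u + coco n x γ w v) / 2
      - (∑ f, (u f - v f) ^ 2) / 8 := by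
    unfold coco
    rw [hquad]
    linarith [hpen']
  linarith

/-- The CoCo objective is jointly continuous in all of its arguments. -/
lemma coco_cont {D : ℕ} (n : Fin D → ℕ) :
    Continuous (fun z : (EuclideanSpace ℝ (TIdx n) × ℝ × (∀ d, Fin (n d) → Fin (n d) → ℝ))
        × EuclideanSpace ℝ (TIdx n) => coco n z.1.1 z.1.2.1 z.1.2.2 z.2) := by
  have hev : ∀ f : TIdx n, Continuous fun v : EuclideanSpace ℝ (TIdx n) => v f :=
    fun f => (EuclideanSpace.proj f).continuous
  unfold coco
  apply Continuous.add
  · apply continuous_const.mul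
    apply continuous_finset_sum; intro f _
    exact (((hev f).comp (continuous_fst.fst)).sub ((hev f).comp continuous_snd)).pow 2
  · apply Continuous.mul
    · exact continuous_fst.snd.fst
    · apply continuous_finset_sum; intro d _
      unfold Rmode
      apply continuous_finset_sum; intro i _
      apply continuous_finset_sum; intro j _
      by_cases h : i < j
      · simp only [if_pos h]
        apply Continuous.mul
        · have hW : Continuous fun z : (EuclideanSpace ℝ (TIdx n) × ℝ
              × (∀ d, Fin (n d) → Fin (n d) → ℝ)) × EuclideanSpace ℝ (TIdx n) => z.1.2.2 :=
            continuous_fst.snd.snd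
          exact (continuous_apply j).comp (((continuous_apply i).comp
            ((continuous_apply d).comp hW)))
        · unfold l2
          apply Real.continuous_sqrt.comp
          apply continuous_finset_sum; intro a _
          apply Continuous.pow
          show Continuous fun z : (EuclideanSpace ℝ (TIdx n) × ℝ × (∀ d, Fin (n d) → Fin (n d) → ℝ)) × EuclideanSpace ℝ (TIdx n) => (Amat n d i j).mulVec z.2 a
          simp only [Matrix.mulVec, dotProduct]
          apply continuous_finset_sum; intro f _
          exact continuous_const.mul ((hev f).comp continuous_snd)
      · simp only [if_neg h]; exact continuous_const

/-- **Proposition 4.1.** The unique minimizer of the CoCo objective, viewed as a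
map `(x, γ, w) ↦ û(x, γ, w)`, is jointly continuous in the data `x`, the tuning parameter
`γ ∈ [0,∞)`, and the collection of nonnegative weights `{w_{d,ij}}`. -/
theorem coco_minimizer_jointly_continuous
    {D : ℕ} (n : Fin D → ℕ)
    (uhat : EuclideanSpace ℝ (TIdx n) × ℝ × (∀ d, Fin (n d) → Fin (n d) → ℝ) →
      EuclideanSpace ℝ (TIdx n))
    (huhat : ∀ p ∈ {q : EuclideanSpace ℝ (TIdx n) × ℝ × (∀ d, Fin (n d) → Fin (n d) → ℝ) |
        0 ≤ q.2.1 ∧ ∀ d i j, i < j → 0 ≤ q.2.2 d i j},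
      ∀ u : EuclideanSpace ℝ (TIdx n), coco n p.1 p.2.1 p.2.2 (uhat p) ≤ coco n p.1 p.2.1 p.2.2 u) :
    ContinuousOn uhat
      {q : EuclideanSpace ℝ (TIdx n) × ℝ × (∀ d, Fin (n d) → Fin (n d) → ℝ) |
        0 ≤ q.2.1 ∧ ∀ d i j, i < j → 0 ≤ q.2.2 d i j} := by
  set S := {q : EuclideanSpace ℝ (TIdx n) × ℝ × (∀ d, Fin (n d) → Fin (n d) → ℝ) |
      0 ≤ q.2.1 ∧ ∀ d i j, i < j → 0 ≤ q.2.2 d i j} with hS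
  -- A priori bound on the minimizer
  have hbound : ∀ q ∈ S, ‖uhat q‖ ≤ 2 * ‖q.1‖ := by
    intro q hq
    set v := uhat q with hv
    have h0 := huhat q hq (0 : EuclideanSpace ℝ (TIdx n))
    have hz : coco n q.1 q.2.1 q.2.2 (0 : EuclideanSpace ℝ (TIdx n))
        = (1 / 2) * ∑ f, q.1 f ^ 2 := coco_zero n q.1 q.2.1 q.2.2
    have hlow := half_le_coco n q.1 q.2.1 q.2.2 hq.1 hq.2 v
    have hsum : ∑ f, (q.1 f - v f) ^ 2 ≤ ∑ f, q.1 f ^ 2 := by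
      rw [hz] at h0; linarith
    have hns : ‖q.1 - v‖ ^ 2 ≤ ‖q.1‖ ^ 2 := by
      rw [norm_sq_eq, norm_sq_eq]
      calc ∑ a, (q.1 - v) a ^ 2 = ∑ f, (q.1 f - v f) ^ 2 :=
            Finset.sum_congr rfl fun f _ => by rw [PiLp.sub_apply]
        _ ≤ ∑ f, q.1 f ^ 2 := hsum
    have h1 : ‖q.1 - v‖ ≤ ‖q.1‖ := by
      nlinarith [norm_nonneg (q.1 - v), norm_nonneg q.1]
    calc ‖v‖ = ‖q.1 - (q.1 - v)‖ := by rw [sub_sub_cancel]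
      _ ≤ ‖q.1‖ + ‖q.1 - v‖ := norm_sub_le _ _
      _ ≤ 2 * ‖q.1‖ := by linarith
  intro p hp
  rw [Metric.continuousWithinAt_iff]
  intro ε hε
  set M := 2 * ‖p.1‖ + 2 with hM
  set K := Metric.closedBall p 1 ×ˢ Metric.closedBall (0 : EuclideanSpace ℝ (TIdx n)) M with hK
  have hKc : IsCompact K :=
    (isCompact_closedBall _ _).prod (isCompact_closedBall _ _)
  have hUC := hKc.uniformContinuousOn_of_continuous (coco_cont n).continuousOn
  rw [Metric.uniformContinuousOn_iff] at hUC
  obtain ⟨δ', hδ', hδ'impl⟩ := hUC (ε ^ 2 / 9) (by positivity)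
  refine ⟨min δ' 1, by positivity, ?_⟩
  intro q hq hqd
  have hq1 : dist q.1 p.1 ≤ dist q p := le_max_left _ _
  have hqp1 : dist q p < 1 := lt_of_lt_of_le hqd (min_le_right _ _)
  have hqp' : dist q p < δ' := lt_of_lt_of_le hqd (min_le_left _ _)
  set u := uhat p with hu
  set v := uhat q with hv
  have hub : ‖u‖ ≤ M := le_trans (hbound p hp) (by rw [hM]; linarith)
  have hvb : ‖v‖ ≤ M := by
    have h2 : ‖q.1‖ ≤ ‖p.1‖ + 1 := by
      have h3 : ‖q.1‖ - ‖p.1‖ ≤ ‖q.1 - p.1‖ := norm_sub_norm_le _ _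
      have h4 : ‖q.1 - p.1‖ = dist q.1 p.1 := (dist_eq_norm _ _).symm
      linarith [le_trans hq1 (le_of_lt hqp1)]
    calc ‖v‖ ≤ 2 * ‖q.1‖ := hbound q hq
      _ ≤ M := by rw [hM]; linarith
  -- memberships in K
  have hqK : q ∈ Metric.closedBall p 1 := Metric.mem_closedBall.mpr (le_of_lt hqp1)
  have hpK : p ∈ Metric.closedBall p 1 := Metric.mem_closedBall_self (by norm_num)
  have huK : u ∈ Metric.closedBall (0 : EuclideanSpace ℝ (TIdx n)) M := by
    rw [Metric.mem_closedBall, dist_zero_right]; exact hub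
  have hvK : v ∈ Metric.closedBall (0 : EuclideanSpace ℝ (TIdx n)) M := by
    rw [Metric.mem_closedBall, dist_zero_right]; exact hvb
  have hdqp : ∀ z : EuclideanSpace ℝ (TIdx n),
      dist ((q, z) : _ × EuclideanSpace ℝ (TIdx n)) (p, z) = dist q p := by
    intro z
    rw [Prod.dist_eq]
    simp [dist_self]
  have h1 := hδ'impl (q, u) (Set.mk_mem_prod hqK huK) (p, u) (Set.mk_mem_prod hpK huK)
    (by rw [hdqp]; exact hqp')
  have h2 := hδ'impl (q, v) (Set.mk_mem_prod hqK hvK) (p, v) (Set.mk_mem_prod hpK hvK)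
    (by rw [hdqp]; exact hqp')
  rw [Real.dist_eq, abs_lt] at h1 h2
  simp only at h1 h2
  -- minimality at p
  have hpmin : coco n p.1 p.2.1 p.2.2 u ≤ coco n p.1 p.2.1 p.2.2 v := huhat p hp v
  -- strong convexity at q
  have hkey := coco_strong n q.1 q.2.1 q.2.2 hq.1 hq.2 u v
    (huhat q hq (WithLp.toLp 2 ((fun f => (u f + v f) / 2) : TIdx n → ℝ)))
  have hgap : coco n q.1 q.2.1 q.2.2 u - coco n q.1 q.2.1 q.2.2 v < 2 * (ε ^ 2 / 9) := by
    linarith [h1.2, h2.1, hpmin]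
  have hfin : ∑ f, (u f - v f) ^ 2 < 8 * (ε ^ 2 / 9) := by linarith
  have hdist : dist (uhat q) (uhat p) ^ 2 = ∑ f, (u f - v f) ^ 2 := by
    rw [dist_eq_norm, norm_sq_eq]
    refine Finset.sum_congr rfl fun f _ => ?_
    rw [PiLp.sub_apply]; ring
  have : dist (uhat q) (uhat p) ^ 2 < ε ^ 2 := by
    rw [hdist]; nlinarith
  nlinarith [dist_nonneg (x := uhat q) (y := uhat p), hε]
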